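/- In a monoidal setting for dynamic stability with compatible unit clock, every T-flow φ : T × E → E is a solution of its own derivative: φ is a morphism of F-coalgebras from L_E to Dφ, i.e. F(φ) ∘ L_E = Dφ ∘ φ. -/

import Mathlib

open CategoryTheory CategoryTheory.Limits

universe v u

/-- The data of a monoidal setting for dynamic stability, without the monoid
structure on the time object: an endofunctor `F` with a laxator `ψ` (axiom D5),
stationary systems `0` (axiom D6), a time object `T` with a distinguished point
`e = 0_⊕` and a unit-clock coalgebra `1_T : T ⟶ F T`. -/
structure PreSetting (C : Type u) [Category.{v} C] [HasFiniteProducts C] where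
  /-- the endofunctor -/
  F : C ⥤ C
  /-- the laxator (axiom D5) -/
  ψ : ∀ A B : C, F.obj A ⨯ F.obj B ⟶ F.obj (A ⨯ B)
  ψ_nat : ∀ {A A' B B' : C} (u : A ⟶ A') (w : B ⟶ B'),
    prod.map (F.map u) (F.map w) ≫ ψ A' B' = ψ A B ≫ F.map (prod.map u w)
  ψ_assoc : ∀ A B D : C,
    prod.map (ψ A B) (𝟙 (F.obj D)) ≫ ψ (A ⨯ B) D ≫
        F.map (prod.associator A B D).hom =
      (prod.associator (F.obj A) (F.obj B) (F.obj D)).hom ≫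
        prod.map (𝟙 (F.obj A)) (ψ B D) ≫ ψ A (B ⨯ D)
  /-- stationary systems (axiom D6) -/
  z : ∀ A : C, A ⟶ F.obj A
  z_nat : ∀ {A B : C} (u : A ⟶ B), z A ≫ F.map u = u ≫ z B
  z_mul : ∀ A B : C, prod.map (z A) (z B) ≫ ψ A B = z (A ⨯ B)
  /-- the time object -/
  T : C
  /-- the point `0_⊕` of the time object -/
  e : ⊤_ C ⟶ T
  /-- the unit clock coalgebra -/
  oneT : T ⟶ F.obj T

namespace PreSetting

variable {C : Type u} [Category.{v} C] [HasFiniteProducts C] (S : PreSetting C)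

/-- The coalgebra `L_X := ψ_{T,X} ∘ (1_T × 0_X) : T ⨯ X ⟶ F (T ⨯ X)`. -/
noncomputable def L (X : C) : S.T ⨯ X ⟶ S.F.obj (S.T ⨯ X) :=
  prod.map S.oneT (S.z X) ≫ S.ψ S.T X

/-- The initial-condition inclusion `0_⊕ × id_X : X ⟶ T ⨯ X`. -/
noncomputable def ins (X : C) : X ⟶ S.T ⨯ X :=
  prod.lift (terminal.from X ≫ S.e) (𝟙 X)

/-- `p` is a morphism of `F`-coalgebras from `(A, f)` to `(B, g)`. -/
def IsCoalgHom {A B : C} (f : A ⟶ S.F.obj A) (g : B ⟶ S.F.obj B)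
    (p : A ⟶ B) : Prop :=
  f ≫ S.F.map p = p ≫ g

/-- The derivative of a flow `φ : T ⨯ E ⟶ E`:
`Dφ := Fφ ∘ L_E ∘ (0_⊕ × id_E)`. -/
noncomputable def deriv {E : C} (φ : S.T ⨯ E ⟶ E) : E ⟶ S.F.obj E :=
  S.ins E ≫ S.L E ≫ S.F.map φ

/-- `T`-completeness of a coalgebra `(A, f)`: every `g : B ⟶ A` extends to a
unique coalgebra morphism `γ : L_B ⟶ f` with initial condition `g`. -/
def TComplete {A : C} (f : A ⟶ S.F.obj A) : Prop :=
  ∀ {B : C} (g : B ⟶ A), ∃! γ : S.T ⨯ B ⟶ A,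
    S.IsCoalgHom (S.L B) f γ ∧ S.ins B ≫ γ = g

end PreSetting

/-- A monoidal setting for dynamic stability: a `PreSetting` together with a
monoid structure `(T, ⊕, 0_⊕)` on the time object. -/
structure DynSetting (C : Type u) [Category.{v} C] [HasFiniteProducts C]
    extends PreSetting C where
  /-- the monoid operation `⊕` on the time object -/
  mul : T ⨯ T ⟶ T
  mul_one : prod.lift (𝟙 T) (terminal.from T ≫ e) ≫ mul = 𝟙 T
  one_mul : prod.lift (terminal.from T ≫ e) (𝟙 T) ≫ mul = 𝟙 T
  mul_assoc : (prod.associator T T T).inv ≫ prod.map mul (𝟙 T) ≫ mul =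
    prod.map (𝟙 T) mul ≫ mul

namespace DynSetting

variable {C : Type u} [Category.{v} C] [HasFiniteProducts C] (S : DynSetting C)

/-- `φ : T ⨯ E ⟶ E` is a `T`-flow (monoid action). -/
def IsFlow {E : C} (φ : S.T ⨯ E ⟶ E) : Prop :=
  S.ins E ≫ φ = 𝟙 E ∧
    prod.map (𝟙 S.T) φ ≫ φ =
      (prod.associator S.T S.T E).inv ≫ prod.map S.mul (𝟙 E) ≫ φ

/-- Compatibility of the unit clock with the monoid structure:
`F(⊕) ∘ L_T = 1_T ∘ ⊕`. -/
def ClockCompat : Prop :=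
  S.L S.T ≫ S.F.map S.mul = S.mul ≫ S.oneT

end DynSetting

/-- **Every flow solves its own derivative.** In a monoidal setting for dynamic
stability with compatible unit clock (`F(⊕) ∘ L_T = 1_T ∘ ⊕`), every `T`-flow
`φ : T ⨯ E ⟶ E` is a morphism of `F`-coalgebras from `L_E` to its derivative
`Dφ`, i.e. `F(φ) ∘ L_E = Dφ ∘ φ`. -/
theorem flow_is_solution_of_deriv {C : Type u} [Category.{v} C]
    [HasFiniteProducts C] (S : DynSetting C) (hcc : S.ClockCompat)
    {E : C} (φ : S.T ⨯ E ⟶ E) (hφ : S.IsFlow φ) :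
    S.toPreSetting.IsCoalgHom (S.L E) (S.toPreSetting.deriv φ) φ := by
  obtain ⟨h0, hact⟩ := hφ
  show S.L E ≫ S.F.map φ = φ ≫ S.toPreSetting.deriv φ
  unfold PreSetting.deriv PreSetting.L PreSetting.ins
  symm
  have hassoc : prod.map (𝟙 (S.F.obj S.T)) (S.ψ S.T E) ≫ S.ψ S.T (S.T ⨯ E) =
      (Limits.prod.associator _ _ _).inv ≫ prod.map (S.ψ S.T S.T) (𝟙 (S.F.obj E)) ≫
        S.ψ (S.T ⨯ S.T) E ≫ S.F.map (Limits.prod.associator S.T S.T E).hom := by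
    rw [S.ψ_assoc, Iso.inv_hom_id_assoc]
  calc φ ≫ prod.lift (terminal.from E ≫ S.e) (𝟙 E) ≫
        (prod.map S.oneT (S.z E) ≫ S.ψ S.T E) ≫ S.F.map φ
      = prod.lift (terminal.from (S.T ⨯ E) ≫ S.e ≫ S.oneT) (φ ≫ S.z E) ≫
          S.ψ S.T E ≫ S.F.map φ := by
        rw [prod.comp_lift_assoc]
        simp only [Category.assoc]
        rw [prod.lift_map_assoc]
        simp only [Category.comp_id, Category.id_comp]
        rw [show φ ≫ terminal.from E ≫ S.e =
          terminal.from (S.T ⨯ E) ≫ S.e from by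
            rw [← Category.assoc, terminal.comp_from]]
        simp
    _ = prod.lift (terminal.from (S.T ⨯ E) ≫ S.e ≫ S.oneT)
          ((prod.map (S.z S.T) (S.z E) ≫ S.ψ S.T E) ≫ S.F.map φ) ≫
          S.ψ S.T E ≫ S.F.map φ := by
        rw [S.z_mul, S.z_nat]
    _ = (prod.lift (terminal.from (S.T ⨯ E) ≫ S.e ≫ S.oneT)
          (prod.map (S.z S.T) (S.z E) ≫ S.ψ S.T E) ≫
          prod.map (𝟙 (S.F.obj S.T)) (S.F.map φ)) ≫
          S.ψ S.T E ≫ S.F.map φ := by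
        rw [prod.lift_map]
        simp
    _ = prod.lift (terminal.from (S.T ⨯ E) ≫ S.e ≫ S.oneT)
          (prod.map (S.z S.T) (S.z E) ≫ S.ψ S.T E) ≫
          S.ψ S.T (S.T ⨯ E) ≫ S.F.map (prod.map (𝟙 S.T) φ ≫ φ) := by
        have h := S.ψ_nat (𝟙 S.T) φ
        rw [S.F.map_id] at h
        rw [Category.assoc, ← Category.assoc (prod.map _ _) (S.ψ S.T E), h]
        simp
    _ = prod.lift (terminal.from (S.T ⨯ E) ≫ S.e ≫ S.oneT)
          (prod.map (S.z S.T) (S.z E)) ≫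
          prod.map (𝟙 (S.F.obj S.T)) (S.ψ S.T E) ≫
          S.ψ S.T (S.T ⨯ E) ≫
          S.F.map ((Limits.prod.associator S.T S.T E).inv ≫
            prod.map S.mul (𝟙 E) ≫ φ) := by
        rw [hact, prod.lift_map_assoc]
        simp
    _ = prod.lift (terminal.from (S.T ⨯ E) ≫ S.e ≫ S.oneT)
          (prod.map (S.z S.T) (S.z E)) ≫
          (Limits.prod.associator _ _ _).inv ≫
          prod.map (S.ψ S.T S.T) (𝟙 (S.F.obj E)) ≫
          S.ψ (S.T ⨯ S.T) E ≫ S.F.map (prod.map S.mul (𝟙 E) ≫ φ) := by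
        rw [← Category.assoc (prod.map (𝟙 (S.F.obj S.T)) (S.ψ S.T E)), hassoc]
        simp only [Category.assoc]
        rw [← S.F.map_comp, Iso.hom_inv_id_assoc]
    _ = prod.lift (terminal.from (S.T ⨯ E) ≫ S.e ≫ S.oneT)
          (prod.map (S.z S.T) (S.z E)) ≫
          (Limits.prod.associator _ _ _).inv ≫
          prod.map (S.ψ S.T S.T ≫ S.F.map S.mul) (𝟙 (S.F.obj E)) ≫
          S.ψ S.T E ≫ S.F.map φ := by
        have h := S.ψ_nat S.mul (𝟙 E)
        rw [S.F.map_id] at h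
        rw [S.F.map_comp, ← Category.assoc (S.ψ (S.T ⨯ S.T) E), ← h]
        simp [prod.map_map_assoc]
    _ = (prod.map S.oneT (S.z E) ≫ S.ψ S.T E) ≫ S.F.map φ := by
        have hLT : prod.map S.oneT (S.z S.T) ≫ S.ψ S.T S.T ≫ S.F.map S.mul =
            S.mul ≫ S.oneT := by
          have h := hcc
          unfold DynSetting.ClockCompat PreSetting.L at h
          simpa [Category.assoc] using h
        have hC : prod.lift (terminal.from (S.T ⨯ E) ≫ S.e ≫ S.oneT)
            (prod.map (S.z S.T) (S.z E)) ≫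
            (Limits.prod.associator _ _ _).inv ≫
            prod.map (S.ψ S.T S.T ≫ S.F.map S.mul) (𝟙 (S.F.obj E)) =
            prod.map S.oneT (S.z E) := by
          apply Limits.prod.hom_ext
          · simp only [Category.assoc, prod.map_fst]
            have e1 : prod.lift (terminal.from (S.T ⨯ E) ≫ S.e ≫ S.oneT)
                (prod.map (S.z S.T) (S.z E)) ≫
                (Limits.prod.associator (S.F.obj S.T) (S.F.obj S.T)
                  (S.F.obj E)).inv ≫ prod.fst =
                prod.lift (terminal.from (S.T ⨯ E) ≫ S.e) prod.fst ≫
                  prod.map S.oneT (S.z S.T) := by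
              apply Limits.prod.hom_ext <;> simp [Limits.prod.associator] <;>
                erw [prod.lift_fst_assoc]
              · erw [prod.lift_fst, prod.lift_fst, prod.lift_fst]
              · erw [prod.lift_snd, prod.lift_snd_assoc, prod.lift_snd, prod.map_fst]
            have e2 : prod.lift (terminal.from (S.T ⨯ E) ≫ S.e)
                (prod.fst : S.T ⨯ E ⟶ S.T) ≫ S.mul = prod.fst := by
              have e3 : prod.lift (terminal.from (S.T ⨯ E) ≫ S.e)
                  (prod.fst : S.T ⨯ E ⟶ S.T) =
                  prod.fst ≫ prod.lift (terminal.from S.T ≫ S.e) (𝟙 S.T) := by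
                apply Limits.prod.hom_ext <;> simp
              rw [e3, Category.assoc, S.one_mul, Category.comp_id]
            rw [reassoc_of% e1, hLT, ← Category.assoc, e2]
          · simp [Limits.prod.associator]
            erw [prod.lift_snd, prod.lift_snd_assoc, prod.map_snd]
        rw [← hC]
        simp only [Category.assoc]
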